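/- arXiv:0809.1404 — 4 statements merged into one kernel-verified Lean document; each statement's English description precedes it below -/
import Mathlib

section
/- Generalized Farkas Lemma: Let X be a compact Hausdorff space, Y a real Hilbert space, and A : Y → C(X) a bounded linear map with adjoint A' : C(X)* → Y defined by ⟨λ, Ay⟩ = ⟨A'λ, y⟩. Then exactly one of the following holds: (1) there exists a nonzero positive functional t ∈ C(X)* with A't = 0; (2) there exists y ∈ Y such that (Ay)(x) > 0 for all x ∈ X. -/
/-- Generalized Farkas Lemma: for `X` compact Hausdorff, `Y` a real Hilbert space, and
`A : Y → C(X)` bounded linear with adjoint `A' : C(X)* → Y` (via Riesz representation,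
`⟨λ, Ay⟩ = ⟨A'λ, y⟩`), exactly one of the following holds:
(1) there is a nonzero positive `t ∈ C(X)*` with `A't = 0`;
(2) there is `y ∈ Y` with `(Ay)(x) > 0` for all `x`. -/
theorem stmt_4 {X : Type*} [TopologicalSpace X] [CompactSpace X] [T2Space X]
    {Y : Type*} [NormedAddCommGroup Y] [InnerProductSpace ℝ Y] [CompleteSpace Y]
    (A : Y →L[ℝ] C(X, ℝ)) :
    Xor'
      (∃ t : C(X, ℝ) →L[ℝ] ℝ, t ≠ 0 ∧ (∀ f : C(X, ℝ), (∀ x, 0 ≤ f x) → 0 ≤ t f) ∧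
        (InnerProductSpace.toDual ℝ Y).symm (t.comp A) = 0)
      (∃ y : Y, ∀ x : X, 0 < A y x) := by
  by_cases h2 : ∃ y : Y, ∀ x : X, 0 < A y x
  · right
    refine ⟨h2, ?_⟩
    rintro ⟨t, ht0, htpos, htA⟩
    obtain ⟨y, hy⟩ := h2
    have hAt : t.comp A = 0 := by
      have := congrArg (InnerProductSpace.toDual ℝ Y) htA
      simpa using this
    -- |t f| ≤ ‖f‖ * t 1
    have hbound : ∀ f : C(X, ℝ), |t f| ≤ ‖f‖ * t 1 := by
      intro f
      have h1 : 0 ≤ t ((‖f‖ : ℝ) • (1 : C(X, ℝ)) - f) := by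
        refine htpos _ fun x => ?_
        simp only [ContinuousMap.sub_apply, ContinuousMap.smul_apply,
          ContinuousMap.one_apply, smul_eq_mul, mul_one, sub_nonneg]
        exact (le_abs_self _).trans (f.norm_coe_le_norm x)
      have h2' : 0 ≤ t ((‖f‖ : ℝ) • (1 : C(X, ℝ)) + f) := by
        refine htpos _ fun x => ?_
        simp only [ContinuousMap.add_apply, ContinuousMap.smul_apply,
          ContinuousMap.one_apply, smul_eq_mul, mul_one]
        have := (neg_abs_le (f x)).trans (le_abs_self (f x))
        have := neg_le_of_abs_le (f.norm_coe_le_norm x)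
        linarith
      rw [map_sub, map_smul] at h1
      rw [map_add, map_smul] at h2'
      rw [abs_le]
      constructor <;> simp only [smul_eq_mul] at h1 h2' <;> linarith
    have ht1pos : 0 < t 1 := by
      rcases lt_or_eq_of_le (htpos 1 fun x => by simp) with h | h
      · exact h
      · exfalso
        apply ht0
        ext f
        have hb := hbound f
        rw [← h, mul_zero] at hb
        simpa using abs_nonpos_iff.mp hb
    -- X nonempty
    have hX : Nonempty X := by
      by_contra hX
      have : (1 : C(X, ℝ)) = 0 := by
        ext x
        exact absurd ⟨x⟩ hX
      rw [this, map_zero] at ht1pos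
      exact lt_irrefl 0 ht1pos
    -- min of A y
    obtain ⟨x₀, -, hx₀⟩ := isCompact_univ.exists_isMinOn (Set.univ_nonempty)
      (A y).continuous.continuousOn
    set ε := A y x₀ with hε
    have hεpos : 0 < ε := hy x₀
    have hge : 0 ≤ t (A y - ε • (1 : C(X, ℝ))) := by
      refine htpos _ fun x => ?_
      simp only [ContinuousMap.sub_apply, ContinuousMap.smul_apply,
        ContinuousMap.one_apply, smul_eq_mul, mul_one, sub_nonneg]
      exact hx₀ (Set.mem_univ x)
    rw [map_sub, map_smul, smul_eq_mul] at hge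
    have htAy : t (A y) = 0 := by
      have := congrFun (congrArg (fun g : Y →L[ℝ] ℝ => (g : Y → ℝ)) hAt) y
      simpa using this
    rw [htAy] at hge
    nlinarith
  · left
    refine ⟨?_, h2⟩
    have hX : Nonempty X := by
      by_contra hX
      exact h2 ⟨0, fun x => absurd ⟨x⟩ hX⟩
    set P : Set C(X, ℝ) := {f | ∀ x, 0 < f x} with hP
    have hPconv : Convex ℝ P := by
      intro f hf g hg a b ha hb hab
      intro x
      simp only [ContinuousMap.add_apply, ContinuousMap.smul_apply, smul_eq_mul]
      rcases ha.lt_or_eq with ha' | ha'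
      · have : 0 ≤ b * g x := mul_nonneg hb (hg x).le
        nlinarith [hf x]
      · have hb1 : b = 1 := by linarith
        rw [← ha', hb1]
        simpa using hg x
    have hPopen : IsOpen P := by
      rw [Metric.isOpen_iff]
      intro f hf
      obtain ⟨x₀, -, hx₀⟩ := isCompact_univ.exists_isMinOn (Set.univ_nonempty)
        f.continuous.continuousOn
      refine ⟨f x₀, hf x₀, fun g hg => ?_⟩
      intro x
      have h1 : |g x - f x| ≤ ‖g - f‖ := by
        simpa using (g - f).norm_coe_le_norm x
      have h2' : ‖g - f‖ < f x₀ := by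
        rw [Metric.mem_ball, dist_eq_norm] at hg
        exact hg
      have h3 : f x₀ ≤ f x := hx₀ (Set.mem_univ x)
      have h4 := abs_le.mp h1
      have : 0 < g x := by linarith [h4.1]
      exact this
    have hRconv : Convex ℝ (Set.range A) := by
      rintro _ ⟨y1, rfl⟩ _ ⟨y2, rfl⟩ a b _ _ _
      exact ⟨a • y1 + b • y2, by simp⟩
    have hdisj : Disjoint P (Set.range A) := by
      rw [Set.disjoint_left]
      rintro f hf ⟨y, rfl⟩
      exact h2 ⟨y, hf⟩
    obtain ⟨φ, u, hφP, hφR⟩ := geometric_hahn_banach_open hPconv hPopen hRconv hdisj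
    have hu0 : u ≤ 0 := by
      have := hφR (A 0) ⟨0, rfl⟩
      simpa using this
    have hzero : ∀ y : Y, φ (A y) = 0 := by
      intro y
      by_contra hne
      set a := φ (A y) with ha
      have key : ∀ c : ℝ, u ≤ c * a := by
        intro c
        have := hφR (A (c • y)) ⟨c • y, rfl⟩
        simpa [map_smul, smul_eq_mul] using this
      have := key ((u - 1) / a)
      rw [div_mul_cancel₀ _ hne] at this
      linarith
    have hφ1 : φ 1 < 0 := by
      have := hφP 1 (fun x => by simp)
      linarith
    have hφneg : ∀ f : C(X, ℝ), (∀ x, 0 ≤ f x) → φ f ≤ 0 := by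
      intro f hf
      have key : ∀ ε : ℝ, 0 < ε → φ f < ε * (-φ 1) := by
        intro ε hε
        have hmem : f + ε • (1 : C(X, ℝ)) ∈ P := by
          intro x
          simp only [ContinuousMap.add_apply, ContinuousMap.smul_apply,
            ContinuousMap.one_apply, smul_eq_mul, mul_one]
          have := hf x
          linarith
        have := hφP _ hmem
        rw [map_add, map_smul, smul_eq_mul] at this
        nlinarith
      by_contra hcon
      push_neg at hcon
      have hc : 0 < -φ 1 := by linarith
      have := key (φ f / (-φ 1)) (by positivity)
      rw [div_mul_cancel₀ _ (ne_of_gt hc)] at this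
      exact lt_irrefl _ this
    refine ⟨-φ, ?_, ?_, ?_⟩
    · intro h
      have : φ 1 = 0 := by
        have := congrFun (congrArg (fun g : C(X, ℝ) →L[ℝ] ℝ => (g : C(X, ℝ) → ℝ)) h) 1
        simpa [neg_eq_zero] using this
      linarith
    · intro f hf
      have := hφneg f hf
      simpa using this
    · have : (-φ).comp A = 0 := by
        ext y
        simp [hzero y]
      rw [this]
      simp
end

section
/- In the setting of the generalized Farkas lemma, if there is no nonzero positive t ∈ C(X)* with A't = 0, then there exists ε > 0 such that ‖A't‖ ≥ ε‖t‖ for all positive t ∈ C(X)*. -/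
open NormedSpace ContinuousLinearMap

/-- A positive functional on `C(X, ℝ)` has norm `t 1`. -/
lemma pos_norm_eq {X : Type*} [TopologicalSpace X] [CompactSpace X] [Nonempty X]
    (t : C(X, ℝ) →L[ℝ] ℝ) (ht : ∀ f : C(X, ℝ), (∀ x, 0 ≤ f x) → 0 ≤ t f) :
    ‖t‖ = t 1 := by
  have key : ∀ f : C(X, ℝ), |t f| ≤ t 1 * ‖f‖ := by
    intro f
    have h1 : (0 : ℝ) ≤ t (‖f‖ • (1 : C(X, ℝ)) - f) := by
      apply ht
      intro x
      simp only [ContinuousMap.sub_apply, ContinuousMap.smul_apply, ContinuousMap.one_apply,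
        smul_eq_mul, mul_one, sub_nonneg]
      exact (le_abs_self _).trans (f.norm_coe_le_norm x)
    have h2 : (0 : ℝ) ≤ t (‖f‖ • (1 : C(X, ℝ)) + f) := by
      apply ht
      intro x
      simp only [ContinuousMap.add_apply, ContinuousMap.smul_apply, ContinuousMap.one_apply,
        smul_eq_mul, mul_one]
      have := (neg_le_abs (f x)).trans (f.norm_coe_le_norm x)
      linarith
    rw [map_sub, map_smul, smul_eq_mul, sub_nonneg] at h1
    rw [map_add, map_smul, smul_eq_mul] at h2
    rw [abs_le]
    constructor <;> [linarith; linarith [mul_comm (t 1) ‖f‖]]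
  apply le_antisymm
  · refine t.opNorm_le_bound ?_ fun f => ?_
    · have := key 1
      simp only [norm_one, mul_one] at this
      exact le_trans (abs_nonneg _) this
    · rw [Real.norm_eq_abs]; exact key f
  · calc t 1 ≤ |t 1| := le_abs_self _
      _ ≤ ‖t‖ * ‖(1 : C(X, ℝ))‖ := t.le_opNorm 1
      _ = ‖t‖ := by rw [norm_one, mul_one]

/-- If there is no nonzero positive `t ∈ C(X)*` with `A't = 0` (adjoint via Riesz
representation), then there exists `ε > 0` with `‖A't‖ ≥ ε‖t‖` for all positive
`t ∈ C(X)*`. -/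
theorem stmt_5 {X : Type*} [TopologicalSpace X] [CompactSpace X] [T2Space X]
    {Y : Type*} [NormedAddCommGroup Y] [InnerProductSpace ℝ Y] [CompleteSpace Y]
    (A : Y →L[ℝ] C(X, ℝ))
    (h : ¬ ∃ t : C(X, ℝ) →L[ℝ] ℝ, t ≠ 0 ∧ (∀ f : C(X, ℝ), (∀ x, 0 ≤ f x) → 0 ≤ t f) ∧
      (InnerProductSpace.toDual ℝ Y).symm (t.comp A) = 0) :
    ∃ ε > 0, ∀ t : C(X, ℝ) →L[ℝ] ℝ, (∀ f : C(X, ℝ), (∀ x, 0 ≤ f x) → 0 ≤ t f) →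
      ε * ‖t‖ ≤ ‖(InnerProductSpace.toDual ℝ Y).symm (t.comp A)‖ := by
  -- reduce `‖A't‖` to `‖t.comp A‖`
  have hnorm : ∀ t : C(X, ℝ) →L[ℝ] ℝ,
      ‖(InnerProductSpace.toDual ℝ Y).symm (t.comp A)‖ = ‖t.comp A‖ := fun t =>
    (InnerProductSpace.toDual ℝ Y).symm.norm_map _
  rcases isEmpty_or_nonempty X with hX | hX
  · -- trivial case: `C(X, ℝ)` is a subsingleton, so every `t` is zero
    refine ⟨1, one_pos, fun t _ => ?_⟩
    have hf0 : ∀ f : C(X, ℝ), f = 0 := fun f => by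
      ext x
      exact (hX.false x).elim
    have ht0 : t = 0 := by
      ext f
      rw [hf0 f, map_zero]
      rfl
    rw [ht0, hnorm, ContinuousLinearMap.zero_comp, one_mul]
    rw [ContinuousLinearMap.opNorm_zero]
    exact ContinuousLinearMap.opNorm_zero.ge
  by_contra hc
  push_neg at hc
  -- the nested closed sets
  set S : Set (WeakDual ℝ C(X, ℝ)) :=
    {s | (∀ f : C(X, ℝ), (∀ x, 0 ≤ f x) → 0 ≤ s f) ∧ s 1 = 1} with hS
  set K : ℕ → Set (WeakDual ℝ C(X, ℝ)) :=
    fun n => {s ∈ S | ∀ y : Y, |s (A y)| ≤ (1 / (n + 1)) * ‖y‖} with hK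
  have hSclosed : IsClosed S := by
    have h1 : IsClosed {s : WeakDual ℝ C(X, ℝ) | ∀ f : C(X, ℝ), (∀ x, 0 ≤ f x) → 0 ≤ s f} := by
      rw [Set.setOf_forall]
      refine isClosed_iInter fun f => ?_
      rcases Classical.em (∀ x, 0 ≤ f x) with hf | hf
      · have he : {s : WeakDual ℝ C(X, ℝ) | (∀ x, 0 ≤ f x) → 0 ≤ s f}
            = {s : WeakDual ℝ C(X, ℝ) | 0 ≤ s f} := by
          ext s; simp [hf]
        rw [he]
        exact isClosed_le continuous_const (WeakDual.eval_continuous f)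
      · simp [hf]
    have h2 : IsClosed {s : WeakDual ℝ C(X, ℝ) | s 1 = 1} :=
      isClosed_eq (WeakDual.eval_continuous 1) continuous_const
    exact h1.inter h2
  have hKclosed : ∀ n, IsClosed (K n) := by
    intro n
    have he : K n = S ∩ ⋂ y : Y,
        {s : WeakDual ℝ C(X, ℝ) | |s (A y)| ≤ (1 / (n + 1)) * ‖y‖} := by
      ext s
      rw [Set.mem_inter_iff, Set.mem_iInter]
      exact Iff.rfl
    rw [he]
    exact hSclosed.inter (isClosed_iInter fun y =>
      isClosed_le ((WeakDual.eval_continuous (A y)).abs) continuous_const)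
  have hKsub : ∀ n, K n ⊆ S := fun n s hs => hs.1
  -- `S` is in the closed unit ball
  have hSball : S ⊆ WeakDual.toStrongDual ⁻¹' Metric.closedBall 0 1 := by
    intro s hs
    simp only [Set.mem_preimage, Metric.mem_closedBall, dist_zero_right]
    have : ‖WeakDual.toStrongDual s‖ = s 1 := pos_norm_eq _ hs.1
    exact ((dist_zero_right (WeakDual.toStrongDual s)).trans (this.trans hs.2)).le
  have hKcompact : IsCompact (K 0) :=
    (WeakDual.isCompact_closedBall (𝕜 := ℝ) (0 : StrongDual ℝ C(X, ℝ)) 1).of_isClosed_subset (hKclosed 0)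
      ((hKsub 0).trans hSball)
  -- each `K n` is nonempty
  have hKne : ∀ n, (K n).Nonempty := by
    intro n
    obtain ⟨t, htpos, htlt⟩ := hc (1 / (n + 1)) (by positivity)
    rw [hnorm] at htlt
    have htne : t ≠ 0 := by
      rintro rfl
      simp only [ContinuousLinearMap.zero_comp, ContinuousLinearMap.opNorm_zero,
        mul_zero] at htlt
      exact lt_irrefl 0 htlt
    have hc0 : (0 : ℝ) < ‖t‖ := by
      by_contra hc0
      push_neg at hc0
      have h0 : ‖t‖ = 0 := le_antisymm hc0 (norm_nonneg t)
      refine htne (ContinuousLinearMap.ext fun f => ?_)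
      have := t.le_opNorm f
      rw [h0, zero_mul] at this
      simpa using le_antisymm this (norm_nonneg _)
    have ht1 : ‖t‖ = t 1 := pos_norm_eq t htpos
    refine ⟨StrongDual.toWeakDual (‖t‖⁻¹ • t), ⟨⟨fun f hf => ?_, ?_⟩, fun y => ?_⟩⟩
    · have hval : (StrongDual.toWeakDual (‖t‖⁻¹ • t)) f = ‖t‖⁻¹ * t f := rfl
      rw [hval]
      exact mul_nonneg (inv_nonneg.mpr (norm_nonneg t)) (htpos f hf)
    · have hval : (StrongDual.toWeakDual (‖t‖⁻¹ • t)) (1 : C(X, ℝ)) = ‖t‖⁻¹ * t 1 := rfl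
      rw [hval, ← ht1, inv_mul_cancel₀ hc0.ne']
    · have hval : (StrongDual.toWeakDual (‖t‖⁻¹ • t)) (A y) = ‖t‖⁻¹ * t (A y) := rfl
      rw [hval, abs_mul, abs_inv, abs_of_nonneg (norm_nonneg t)]
      have h1 : |t (A y)| ≤ ‖t.comp A‖ * ‖y‖ := (t.comp A).le_opNorm y
      have h2 : ‖t.comp A‖ * ‖y‖ ≤ (1 / (n + 1) * ‖t‖) * ‖y‖ :=
        mul_le_mul_of_nonneg_right htlt.le (norm_nonneg y)
      calc ‖t‖⁻¹ * |t (A y)| ≤ ‖t‖⁻¹ * ((1 / (n + 1) * ‖t‖) * ‖y‖) :=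
            mul_le_mul_of_nonneg_left (h1.trans h2) (inv_nonneg.mpr (norm_nonneg t))
        _ = 1 / (n + 1) * ‖y‖ := by field_simp
  have hKmono : ∀ n, K (n + 1) ⊆ K n := by
    intro n s hs
    refine ⟨hs.1, fun y => (hs.2 y).trans ?_⟩
    have hp : (0 : ℝ) < (n : ℝ) + 1 := by positivity
    have hd : (1 : ℝ) / ((n : ℝ) + 1 + 1) ≤ 1 / ((n : ℝ) + 1) :=
      one_div_le_one_div_of_le hp (by linarith)
    push_cast
    exact mul_le_mul_of_nonneg_right hd (norm_nonneg y)
  obtain ⟨s, hsmem⟩ := IsCompact.nonempty_iInter_of_sequence_nonempty_isCompact_isClosed K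
    hKmono hKne hKcompact hKclosed
  simp only [Set.mem_iInter] at hsmem
  -- the limit functional
  set t₀ : C(X, ℝ) →L[ℝ] ℝ := WeakDual.toStrongDual s with ht₀
  have hs0 : s ∈ S := (hsmem 0).1
  have ht₀zero : ∀ y : Y, t₀ (A y) = 0 := by
    intro y
    have hle : ∀ n : ℕ, |t₀ (A y)| ≤ (1 / (n + 1)) * ‖y‖ := fun n => (hsmem n).2 y
    have htend : Filter.Tendsto (fun n : ℕ => (1 / (n + 1 : ℝ)) * ‖y‖) Filter.atTop
        (nhds (0 * ‖y‖)) := tendsto_one_div_add_atTop_nhds_zero_nat.mul_const _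
    rw [zero_mul] at htend
    have : |t₀ (A y)| ≤ 0 := ge_of_tendsto' htend hle
    exact abs_eq_zero.mp (le_antisymm this (abs_nonneg _))
  refine h ⟨t₀, ?_, hs0.1, ?_⟩
  · intro hzero
    have : t₀ 1 = 1 := hs0.2
    rw [hzero] at this
    simp at this
  · have : t₀.comp A = 0 := by
      ext y
      exact ht₀zero y
    rw [this, map_zero]
end

section
/- Let X be compact Hausdorff, Y a real Hilbert space, A : Y → C(X) bounded linear with adjoint A', and T the cone of positive functionals in C(X)*. Suppose w := inf{‖A't‖ : t ∈ T, ‖t‖ = 1} > 0 and that the infimum is attained at t_∞ ∈ T with ‖t_∞‖ = 1. Then setting y = A't_∞ / ‖A't_∞‖, one has ⟨A't, y⟩ ≥ w for all t ∈ T with ‖t‖ = 1, hence (Ay)(x) ≥ w for all x ∈ X. -/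
set_option maxHeartbeats 1000000


/-- In the setting of the generalized Farkas lemma, if `w = inf {‖A't‖ : t ∈ T, ‖t‖ = 1}`
is positive and attained at a unit `t_∞` in the positive cone `T ⊆ C(X)*`, then for
`y = A't_∞ / ‖A't_∞‖` one has `⟨A't, y⟩ ≥ w` for all unit `t ∈ T`, and hence
`(Ay)(x) ≥ w` for all `x ∈ X`. -/
theorem stmt_6 {X : Type*} [TopologicalSpace X] [CompactSpace X] [T2Space X]
    {Y : Type*} [NormedAddCommGroup Y] [InnerProductSpace ℝ Y] [CompleteSpace Y]
    (A : Y →L[ℝ] C(X, ℝ)) (w : ℝ) (hw : 0 < w)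
    (A' : (C(X, ℝ) →L[ℝ] ℝ) → Y)
    (hA' : ∀ t, A' t = (InnerProductSpace.toDual ℝ Y).symm (t.comp A))
    (hinf : ∀ t : C(X, ℝ) →L[ℝ] ℝ,
      (∀ f : C(X, ℝ), (∀ x, 0 ≤ f x) → 0 ≤ t f) → ‖t‖ = 1 → w ≤ ‖A' t‖)
    (tInf : C(X, ℝ) →L[ℝ] ℝ)
    (htInfpos : ∀ f : C(X, ℝ), (∀ x, 0 ≤ f x) → 0 ≤ tInf f)
    (htInfnorm : ‖tInf‖ = 1) (hatt : ‖A' tInf‖ = w) :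
    (∀ t : C(X, ℝ) →L[ℝ] ℝ, (∀ f : C(X, ℝ), (∀ x, 0 ≤ f x) → 0 ≤ t f) → ‖t‖ = 1 →
      w ≤ inner ℝ (A' t) (‖A' tInf‖⁻¹ • A' tInf)) ∧
    (∀ x : X, w ≤ A (‖A' tInf‖⁻¹ • A' tInf) x) := by
  -- ⟪A' t, z⟫ = t (A z)
  have hAd : ∀ (t : C(X, ℝ) →L[ℝ] ℝ) (z : Y),
      (inner ℝ (A' t) z : ℝ) = t (A z) := by
    intro t z
    rw [hA', InnerProductSpace.toDual_symm_apply]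
    rfl
  -- X is nonempty
  have hne : Nonempty X := by
    by_contra h
    have hX : IsEmpty X := not_nonempty_iff.mp h
    have : tInf = 0 := by
      ext f
      have : f = 0 := by ext x; exact hX.elim x
      simp [this]
    have h0 : ‖tInf‖ = 0 := by rw [this]; exact norm_zero (E := C(X, ℝ) →L[ℝ] ℝ)
    rw [htInfnorm] at h0
    exact one_ne_zero h0
  -- norm of positive functional equals value at 1
  have hnorm1 : ‖(1 : C(X, ℝ))‖ = 1 := by
    simpa using (ContinuousMap.norm_one (α := X) (β := ℝ))
  have hone : ∀ t : C(X, ℝ) →L[ℝ] ℝ,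
      (∀ f : C(X, ℝ), (∀ x, 0 ≤ f x) → 0 ≤ t f) → ‖t‖ = 1 → t 1 = 1 := by
    intro t hpos hnt
    have h1 : t 1 ≤ 1 := by
      have := t.le_opNorm 1
      rw [hnt, hnorm1] at this
      calc t 1 ≤ |t 1| := le_abs_self _
        _ ≤ 1 := by simpa using this
    have h2 : (1 : ℝ) ≤ t 1 := by
      rw [← hnt]
      apply ContinuousLinearMap.opNorm_le_bound
      · exact hpos 1 (fun x => by simp)
      · intro f
        have hfp : ∀ x, 0 ≤ (‖f‖ • (1 : C(X, ℝ)) - f) x := by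
          intro x
          simp only [ContinuousMap.sub_apply, ContinuousMap.smul_apply,
            ContinuousMap.one_apply, smul_eq_mul, mul_one]
          have := f.norm_coe_le_norm x
          have := abs_le.mp (by simpa using this)
          linarith [this.2]
        have hfm : ∀ x, 0 ≤ (‖f‖ • (1 : C(X, ℝ)) + f) x := by
          intro x
          simp only [ContinuousMap.add_apply, ContinuousMap.smul_apply,
            ContinuousMap.one_apply, smul_eq_mul, mul_one]
          have := f.norm_coe_le_norm x
          have := abs_le.mp (by simpa using this)
          linarith [this.1]
        have h3 := hpos _ hfp
        have h4 := hpos _ hfm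
        simp only [map_sub, map_add, map_smul, smul_eq_mul] at h3 h4
        rw [Real.norm_eq_abs, abs_le]
        constructor <;> nlinarith
    linarith
  have htInf1 : tInf 1 = 1 := hone tInf htInfpos htInfnorm
  -- A' is affine/linear on convex combinations
  have hlin : ∀ (a b : ℝ) (s t : C(X, ℝ) →L[ℝ] ℝ),
      A' (a • s + b • t) = a • A' s + b • A' t := by
    intro a b s t
    simp only [hA', ContinuousLinearMap.add_comp, ContinuousLinearMap.smul_comp,
      map_add, map_smul]
  set u := A' tInf with hu
  clear_value u
  -- key: ⟪A' t, u⟫ ≥ w^2 for all unit positive t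
  have hkey : ∀ t : C(X, ℝ) →L[ℝ] ℝ, (∀ f : C(X, ℝ), (∀ x, 0 ≤ f x) → 0 ≤ t f) →
      ‖t‖ = 1 → w ^ 2 ≤ (inner ℝ (A' t) u : ℝ) := by
    intro t hpos hnt
    set v := A' t with hv
    clear_value v
    by_contra hc
    push_neg at hc
    set c : ℝ := (inner ℝ v u : ℝ) with hcdef
    clear_value c
    set D : ℝ := ‖v - u‖ ^ 2 with hD
    clear_value D
    have hD0 : 0 ≤ D := by rw [hD]; exact sq_nonneg _
    set η : ℝ := min 1 ((w ^ 2 - c) / (D + 1)) with hη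
    clear_value η
    have hwc : 0 < w ^ 2 - c := by linarith
    have hη0 : 0 < η := by
      rw [hη]; exact lt_min one_pos (div_pos hwc (by linarith))
    have hη1 : η ≤ 1 := by rw [hη]; exact min_le_left _ _
    have hηD : η * (D + 1) ≤ w ^ 2 - c := by
      have hle : η ≤ (w ^ 2 - c) / (D + 1) := by rw [hη]; exact min_le_right _ _
      calc η * (D + 1) ≤ (w ^ 2 - c) / (D + 1) * (D + 1) :=
            mul_le_mul_of_nonneg_right hle (by linarith)
        _ = w ^ 2 - c := div_mul_cancel₀ _ (by linarith)
    -- the combination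
    set s : C(X, ℝ) →L[ℝ] ℝ := (1 - η) • tInf + η • t with hs
    clear_value s
    have hspos : ∀ f : C(X, ℝ), (∀ x, 0 ≤ f x) → 0 ≤ s f := by
      intro f hf
      simp only [hs, ContinuousLinearMap.add_apply, ContinuousLinearMap.smul_apply,
        smul_eq_mul]
      have := htInfpos f hf
      have := hpos f hf
      nlinarith
    have hsnorm : ‖s‖ = 1 := by
      have ht1 : t 1 = 1 := hone t hpos hnt
      have hs1 : s 1 = 1 := by
        simp only [hs, ContinuousLinearMap.add_apply, ContinuousLinearMap.smul_apply,
          smul_eq_mul, htInf1, ht1]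
        ring
      have hle : ‖s‖ ≤ 1 := by
        apply ContinuousLinearMap.opNorm_le_bound _ zero_le_one
        intro f
        have hfp : ∀ x, 0 ≤ (‖f‖ • (1 : C(X, ℝ)) - f) x := by
          intro x
          simp only [ContinuousMap.sub_apply, ContinuousMap.smul_apply,
            ContinuousMap.one_apply, smul_eq_mul, mul_one]
          have := abs_le.mp (by simpa using f.norm_coe_le_norm x)
          linarith [this.2]
        have hfm : ∀ x, 0 ≤ (‖f‖ • (1 : C(X, ℝ)) + f) x := by
          intro x
          simp only [ContinuousMap.add_apply, ContinuousMap.smul_apply,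
            ContinuousMap.one_apply, smul_eq_mul, mul_one]
          have := abs_le.mp (by simpa using f.norm_coe_le_norm x)
          linarith [this.1]
        have h3 := hspos _ hfp
        have h4 := hspos _ hfm
        simp only [map_sub, map_add, map_smul, smul_eq_mul, hs1] at h3 h4
        rw [Real.norm_eq_abs, one_mul, abs_le]
        constructor <;> linarith
      have hge : 1 ≤ ‖s‖ := by
        have h5 := s.le_opNorm 1
        rw [hnorm1, mul_one, Real.norm_eq_abs] at h5
        rw [hs1] at h5
        simp only [abs_one] at h5
        linarith
      linarith
    have hws : w ≤ ‖A' s‖ := hinf s hspos hsnorm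
    have hAs : A' s = (1 - η) • u + η • v := by
      rw [hs, hlin, ← hu, ← hv]
    have hexpand : ‖(1 - η) • u + η • v‖ ^ 2 =
        (1 - η) ^ 2 * ‖u‖ ^ 2 + 2 * (η * (1 - η)) * c + η ^ 2 * ‖v‖ ^ 2 := by
      rw [← real_inner_self_eq_norm_sq, ← real_inner_self_eq_norm_sq,
        ← real_inner_self_eq_norm_sq]
      simp only [inner_add_left, inner_add_right, real_inner_smul_left,
        real_inner_smul_right, hcdef]
      rw [real_inner_comm u v]
      ring
    have hDexp : D = ‖v‖ ^ 2 - 2 * c + ‖u‖ ^ 2 := by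
      rw [hD, ← real_inner_self_eq_norm_sq, ← real_inner_self_eq_norm_sq,
        ← real_inner_self_eq_norm_sq]
      simp only [inner_sub_left, inner_sub_right, hcdef]
      rw [real_inner_comm u v]
      ring
    have hw2 : w ^ 2 ≤ ‖A' s‖ ^ 2 := by
      have h0 : (0:ℝ) ≤ ‖A' s‖ := norm_nonneg _
      nlinarith
    rw [hAs, hexpand, hatt] at hw2
    have hE : η * (2 * (w ^ 2 - c) - η * D) ≤ 0 := by
      rw [hDexp, hatt]; nlinarith [hw2]
    have hE1 : η * (2 * (w ^ 2 - c)) ≤ η * (η * D) := by nlinarith [hE]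
    have hE2 : 2 * (w ^ 2 - c) ≤ η * D := le_of_mul_le_mul_left hE1 hη0
    have h7 : η * D ≤ η * (D + 1) := by nlinarith [hη0]
    linarith
  have hwinv : (0:ℝ) < w⁻¹ := inv_pos.mpr hw
  have part1 : ∀ t : C(X, ℝ) →L[ℝ] ℝ, (∀ f : C(X, ℝ), (∀ x, 0 ≤ f x) → 0 ≤ t f) →
      ‖t‖ = 1 → w ≤ (inner ℝ (A' t) (‖u‖⁻¹ • u) : ℝ) := by
    intro t hpos hnt
    have hk := hkey t hpos hnt
    rw [real_inner_smul_right, hatt]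
    have h2 : w⁻¹ * w ^ 2 ≤ w⁻¹ * (inner ℝ (A' t) u : ℝ) :=
      mul_le_mul_of_nonneg_left hk (le_of_lt hwinv)
    have h3 : w⁻¹ * w ^ 2 = w := by
      rw [pow_two, ← mul_assoc, inv_mul_cancel₀ (ne_of_gt hw), one_mul]
    linarith
  refine ⟨part1, ?_⟩
  intro x
  -- evaluation functional at x
  set ev : C(X, ℝ) →L[ℝ] ℝ := ContinuousMap.evalCLM ℝ x with hev
  have hevapp : ∀ f : C(X, ℝ), ev f = f x := fun f => rfl
  clear_value ev
  have hevpos : ∀ f : C(X, ℝ), (∀ x, 0 ≤ f x) → 0 ≤ ev f := by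
    intro f hf; rw [hevapp]; exact hf x
  have hevnorm : ‖ev‖ = 1 := by
    apply le_antisymm
    · apply ContinuousLinearMap.opNorm_le_bound _ zero_le_one
      intro f
      rw [hevapp, one_mul]
      simpa using f.norm_coe_le_norm x
    · have h5 := ev.le_opNorm 1
      rw [hnorm1, mul_one, Real.norm_eq_abs] at h5
      have h7 : ev 1 = 1 := by rw [hevapp]; simp
      rw [h7] at h5
      simpa using h5
  have := part1 ev hevpos hevnorm
  rwa [hAd, hevapp] at this
end

section
/- Let μ be a finite positive atomless measure on ℝ². For θ ∈ [0, π), let μ(θ) be the pushforward of μ under the projection p ↦ p · (cos θ, sin θ) onto ℝ. Then μ(θ) has a nonzero pure point part for at most countably many θ. -/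
open MeasureTheory Real

/-- Lines in distinct directions (angles in `[0,π)`) meet in at most one point. -/
lemma line_inter_subsingleton {θ θ' x x' : ℝ} (hθ : θ ∈ Set.Ico (0:ℝ) π)
    (hθ' : θ' ∈ Set.Ico (0:ℝ) π) (hne : θ ≠ θ') :
    ({p : ℝ × ℝ | p.1 * Real.cos θ + p.2 * Real.sin θ = x} ∩
      {p : ℝ × ℝ | p.1 * Real.cos θ' + p.2 * Real.sin θ' = x'}).Subsingleton := by
  have hd : Real.sin (θ' - θ) ≠ 0 := by
    have h1 : θ' - θ ∈ Set.Ioo (-π) π := by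
      constructor <;> [nlinarith [hθ.1, hθ.2, hθ'.1, hθ'.2]; nlinarith [hθ.1, hθ.2, hθ'.1, hθ'.2]]
    have h2 : θ' - θ ≠ 0 := sub_ne_zero.mpr (Ne.symm hne)
    rcases lt_or_gt_of_ne h2 with h | h
    · have := Real.sin_pos_of_pos_of_lt_pi (x := -(θ' - θ)) (by linarith) (by linarith [h1.1])
      rw [Real.sin_neg] at this; linarith
    · have := Real.sin_pos_of_pos_of_lt_pi h h1.2
      linarith
  rw [Real.sin_sub] at hd
  rintro ⟨a, b⟩ ⟨h1, h2⟩ ⟨c, d⟩ ⟨h3, h4⟩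
  simp only [Set.mem_setOf_eq] at h1 h2 h3 h4
  have ha : a = c := by
    have : (a - c) * (Real.sin θ' * Real.cos θ - Real.cos θ' * Real.sin θ) = 0 := by
      linear_combination Real.sin θ' * (h1 - h3) - Real.sin θ * (h2 - h4)
    have := mul_eq_zero.mp this
    rcases this with h | h
    · linarith [sub_eq_zero.mp h]
    · exact absurd h hd
  have hb : b = d := by
    have : (b - d) * (Real.sin θ' * Real.cos θ - Real.cos θ' * Real.sin θ) = 0 := by
      linear_combination Real.cos θ * (h2 - h4) - Real.cos θ' * (h1 - h3)
    rcases mul_eq_zero.mp this with h | h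
    · linarith [sub_eq_zero.mp h]
    · exact absurd h hd
  simp [ha, hb]

/-- If `μ` is a finite positive atomless measure on `ℝ²`, then for at most countably
many angles `θ ∈ [0, π)` does the pushforward of `μ` under the orthogonal projection
`p ↦ p · (cos θ, sin θ)` have a nonzero pure point part (i.e. an atom). -/
theorem stmt_8 (μ : Measure (ℝ × ℝ)) [IsFiniteMeasure μ] [NullSingletonClass μ] :
    Set.Countable {θ ∈ Set.Ico (0:ℝ) π |
      ∃ x : ℝ, (Measure.map (fun p : ℝ × ℝ => p.1 * Real.cos θ + p.2 * Real.sin θ) μ)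
        {x} ≠ 0} := by
  set f : ℝ → ℝ × ℝ → ℝ := fun θ p => p.1 * Real.cos θ + p.2 * Real.sin θ with hf
  have hfm : ∀ θ, Measurable (f θ) := fun θ =>
    (measurable_fst.mul_const _).add (measurable_snd.mul_const _)
  set D : ℝ → Set ℝ := fun θ => {x | (Measure.map (f θ) μ) {x} ≠ 0} with hD
  have hDc : ∀ θ, (D θ).Countable := by
    intro θ
    have := Measure.countable_meas_level_set_pos (μ := Measure.map (f θ) μ)
      (g := (id : ℝ → ℝ)) measurable_id
    refine this.mono ?_
    intro x hx
    simp only [Set.mem_setOf_eq, id] at hx ⊢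
    rw [show {a : ℝ | a = x} = {x} from rfl]
    exact pos_iff_ne_zero.mpr hx
  set A : ℝ → Set (ℝ × ℝ) := fun θ =>
    if θ ∈ Set.Ico (0:ℝ) π then f θ ⁻¹' (D θ) else ∅ with hA
  have hAm : ∀ θ, NullMeasurableSet (A θ) μ := by
    intro θ
    simp only [hA]
    split_ifs with h
    · have : f θ ⁻¹' (D θ) = ⋃ x ∈ D θ, f θ ⁻¹' {x} := by
        ext p; simp [Set.mem_preimage]
      rw [this]
      exact (MeasurableSet.biUnion (hDc θ)
        (fun x _ => hfm θ (measurableSet_singleton x))).nullMeasurableSet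
    · exact MeasurableSet.empty.nullMeasurableSet
  have hdisj : Pairwise (Function.onFun (AEDisjoint μ) A) := by
    intro θ θ' hne
    simp only [Function.onFun, AEDisjoint, hA]
    split_ifs with h h'
    · have hsub : (f θ ⁻¹' (D θ)) ∩ (f θ' ⁻¹' (D θ')) ⊆
          ⋃ x ∈ D θ, ⋃ x' ∈ D θ',
            ({p : ℝ × ℝ | f θ p = x} ∩ {p : ℝ × ℝ | f θ' p = x'}) := by
        rintro p ⟨hp1, hp2⟩
        simp only [Set.mem_iUnion]
        exact ⟨f θ p, hp1, f θ' p, hp2, rfl, rfl⟩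
      have hcnt : ((f θ ⁻¹' (D θ)) ∩ (f θ' ⁻¹' (D θ'))).Countable := by
        refine Set.Countable.mono hsub ?_
        refine Set.Countable.biUnion (hDc θ) fun x _ => ?_
        refine Set.Countable.biUnion (hDc θ') fun x' _ => ?_
        exact (line_inter_subsingleton h h' hne).countable
      exact hcnt.measure_zero μ
    · simp
    · simp
    · simp
  have key := Measure.countable_meas_pos_of_disjoint_iUnion₀ (μ := μ) hAm hdisj
  refine key.mono ?_
  rintro θ ⟨hθ, x, hx⟩
  simp only [Set.mem_setOf_eq, hA, if_pos hθ]
  have hxD : x ∈ D θ := hx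
  have : (Measure.map (f θ) μ) {x} = μ (f θ ⁻¹' {x}) :=
    Measure.map_apply (hfm θ) (measurableSet_singleton x)
  have hle : μ (f θ ⁻¹' {x}) ≤ μ (f θ ⁻¹' (D θ)) := by
    apply measure_mono
    intro p hp
    simp only [Set.mem_preimage] at hp ⊢
    rw [hp]; exact hxD
  have : μ (f θ ⁻¹' {x}) ≠ 0 := by rw [← this]; exact hx
  exact lt_of_lt_of_le (pos_iff_ne_zero.mpr this) hle
end
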